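/- arXiv:2104.02937 — 3 statements merged into one kernel-verified Lean document; each statement's English description precedes it below -/
import Mathlib

section
/- For integers k ≥ n > ℓ ≥ 1 and real ε > 0, we have ℓ(k−ℓ)·(1/k + 1/k^(2+ε−log_k(k^ε−1))) ≤ ℓ(1 − ℓ/k^(1+ε)), provided k^ε > 1. -/
theorem stmt_5 (k n ℓ : ℕ) (hℓ : 1 ≤ ℓ) (hn : ℓ < n) (hk : n ≤ k)
    (ε : ℝ) (hε : 0 < ε) (hkε : (k : ℝ) ^ ε > 1) :
    (ℓ : ℝ) * ((k : ℝ) - ℓ) *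
      (1 / k + 1 / (k : ℝ) ^ (2 + ε - Real.logb k ((k : ℝ) ^ ε - 1)))
    ≤ (ℓ : ℝ) * (1 - (ℓ : ℝ) / (k : ℝ) ^ (1 + ε)) := by
  have hk2 : (2:ℝ) ≤ k := by
    have h : 2 ≤ k := by omega
    exact_mod_cast h
  have ha0 : (0:ℝ) < k := by linarith
  set e : ℝ := (k:ℝ) ^ ε with he
  have he1 : 1 < e := hkε
  have hrw : (k:ℝ) ^ (2 + ε - Real.logb k (e - 1)) = (k:ℝ) * k * e / (e - 1) := by
    rw [Real.rpow_sub ha0, Real.rpow_logb ha0 (by linarith) (by linarith),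
      Real.rpow_add ha0, show (2:ℝ) = ((2:ℕ):ℝ) by norm_num, Real.rpow_natCast]
    ring
  have h1e : (k:ℝ) ^ (1 + ε) = k * e := by
    rw [Real.rpow_add ha0, Real.rpow_one]
  rw [hrw, h1e, one_div_div]
  have hℓr : (1:ℝ) ≤ ℓ := by exact_mod_cast hℓ
  have hℓk : (ℓ:ℝ) ≤ (k:ℝ) - 1 := by
    have h : ℓ + 1 ≤ k := by omega
    have h' : ((ℓ:ℝ) + 1) ≤ k := by exact_mod_cast h
    linarith
  have he0 : (0:ℝ) < e := by linarith
  have hR : (ℓ:ℝ) * (1 - (ℓ:ℝ) / ((k:ℝ) * e)) = ((ℓ:ℝ) * ((k:ℝ) * e) - ℓ * ℓ) / ((k:ℝ) * e) := by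
    field_simp
  rw [div_add_div _ _ (by positivity) (by positivity : (k:ℝ)*k*e ≠ 0), ← mul_div_assoc, hR,
    div_le_div_iff₀ (by positivity) (by positivity)]
  have key : (0:ℝ) ≤ ((ℓ:ℝ) - 1) * ((k:ℝ) * (e - 1)) := by
    apply mul_nonneg (by linarith)
    apply mul_nonneg (by linarith) (by linarith)
  nlinarith [mul_nonneg (mul_nonneg (by linarith : (0:ℝ) ≤ (ℓ:ℝ)) ha0.le) key,
    mul_nonneg (mul_nonneg (mul_nonneg (by linarith : (0:ℝ) ≤ (ℓ:ℝ)) (by linarith : (0:ℝ) ≤ (ℓ:ℝ))) ha0.le) (by linarith : (0:ℝ) ≤ e - 1),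
    mul_pos ha0 he0, mul_pos ha0 ha0]
end

section
/- Let n, ℓ, k be integers with k > n > ℓ ≥ 1, and let γ, δ be reals with γ > log_k(n − ℓ + 1) and δ > log_k(k^γ(n−ℓ)/(k^γ − (n−ℓ) − 1)), assuming k^γ > n − ℓ + 1. Then (n−ℓ)(1 + 1/k^δ) < (k−ℓ)(1 − 1/k^γ). -/
theorem stmt_9 (n ℓ k : ℕ) (hℓ : 1 ≤ ℓ) (hn : ℓ < n) (hk : n < k)
    (γ δ : ℝ)
    (hkγ : (k : ℝ) ^ γ > (n : ℝ) - ℓ + 1)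
    (hγ : γ > Real.logb k ((n : ℝ) - ℓ + 1))
    (hδ : δ > Real.logb k ((k : ℝ) ^ γ * ((n : ℝ) - ℓ) /
      ((k : ℝ) ^ γ - ((n : ℝ) - ℓ) - 1))) :
    ((n : ℝ) - ℓ) * (1 + 1 / (k : ℝ) ^ δ) <
    ((k : ℝ) - ℓ) * (1 - 1 / (k : ℝ) ^ γ) := by
  set a : ℝ := (n : ℝ) - ℓ with ha
  have ha1 : (1 : ℝ) ≤ a := by
    have : (ℓ : ℝ) + 1 ≤ (n : ℝ) := by exact_mod_cast hn
    simp [ha]; linarith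
  have hk1 : (1 : ℝ) < (k : ℝ) := by
    have : 1 < k := by omega
    exact_mod_cast this
  have hkR : (k : ℝ) ≥ (n : ℝ) + 1 := by
    have : n + 1 ≤ k := hk
    exact_mod_cast this
  set G : ℝ := (k : ℝ) ^ γ with hG
  set D : ℝ := (k : ℝ) ^ δ with hD
  have hGpos : 0 < G := Real.rpow_pos_of_pos (by linarith) _
  have hDpos : 0 < D := Real.rpow_pos_of_pos (by linarith) _
  have hGa : G - a - 1 > 0 := by linarith
  have hTpos : 0 < G * a / (G - a - 1) := by positivity
  have hDT : D > G * a / (G - a - 1) := by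
    calc G * a / (G - a - 1)
        = (k : ℝ) ^ Real.logb k (G * a / (G - a - 1)) :=
          (Real.rpow_logb (by linarith) (ne_of_gt hk1) hTpos).symm
      _ < D := by
          rw [hD]
          exact Real.rpow_lt_rpow_of_exponent_lt hk1 hδ
  have hkey : D * (G - a - 1) > G * a := (div_lt_iff₀ hGa).mp hDT
  have h1 : a / D + (a + 1) / G < 1 := by
    rw [div_add_div _ _ (ne_of_gt hDpos) (ne_of_gt hGpos),
      div_lt_one (by positivity)]
    nlinarith
  have hfrac1 : a / D = a * (1 / D) := by ring
  have hfrac2 : (a + 1) / G = (a + 1) * (1 / G) := by ring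
  have h2 : a * (1 + 1 / D) < (a + 1) * (1 - 1 / G) := by
    rw [hfrac1, hfrac2] at h1
    nlinarith
  have h3 : (a + 1) * (1 - 1 / G) ≤ ((k : ℝ) - ℓ) * (1 - 1 / G) := by
    have hgl : 1 - 1 / G > 0 := by
      have : 1 / G < 1 := by
        rw [div_lt_one hGpos]; linarith
      linarith
    have : a + 1 ≤ (k : ℝ) - ℓ := by simp [ha]; linarith
    nlinarith
  linarith
end

section
/- Let n, ℓ, k be integers with 1 < k < n and ℓ ≥ 1, and let γ, δ be reals with γ > log_k(n−1) and δ > log_k(n·k^γ/(n·k^γ − (n−1)(k^γ+1))), assuming n·k^γ − (n−1)(k^γ+1) > 0. Then (n−ℓ)(1 − 1/k^δ) > (k−ℓ)(1 + 1/k^γ). -/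
theorem stmt_10 (n ℓ k : ℕ) (hℓ : 1 ≤ ℓ) (hℓn : ℓ < n) (hk1 : 1 < k)
    (hk : k < n) (γ δ : ℝ)
    (hpos : (n : ℝ) * (k : ℝ) ^ γ - ((n : ℝ) - 1) * ((k : ℝ) ^ γ + 1) > 0)
    (hγ : γ > Real.logb k ((n : ℝ) - 1))
    (hδ : δ > Real.logb k ((n : ℝ) * (k : ℝ) ^ γ /
      ((n : ℝ) * (k : ℝ) ^ γ - ((n : ℝ) - 1) * ((k : ℝ) ^ γ + 1)))) :
    ((n : ℝ) - ℓ) * (1 - 1 / (k : ℝ) ^ δ) >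
    ((k : ℝ) - ℓ) * (1 + 1 / (k : ℝ) ^ γ) := by
  have hK : (1:ℝ) < (k:ℝ) := by exact_mod_cast hk1
  have hK0 : (0:ℝ) < (k:ℝ) := by linarith
  have hkn : (k:ℝ) + 1 ≤ (n:ℝ) := by exact_mod_cast hk
  have hℓ1 : (1:ℝ) ≤ (ℓ:ℝ) := by exact_mod_cast hℓ
  have hℓn' : (ℓ:ℝ) < (n:ℝ) := by exact_mod_cast hℓn
  set A := (k:ℝ) ^ γ with hAdef
  have hA0 : 0 < A := Real.rpow_pos_of_pos hK0 γ
  have hn1 : (1:ℝ) < (n:ℝ) := by linarith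
  have hnA : 0 < (n:ℝ) * A := by positivity
  set D := (n:ℝ) * A - ((n:ℝ) - 1) * (A + 1) with hDdef
  have hD0 : 0 < D := hpos
  have hXpos : 0 < (n:ℝ) * A / D := by positivity
  have hB : (k:ℝ) ^ δ > (n:ℝ) * A / D := by
    have h1 := (Real.rpow_lt_rpow_left_iff hK).mpr hδ
    rwa [Real.rpow_logb hK0 hK.ne' hXpos] at h1
  have hDlt : D < (n:ℝ) * A := by nlinarith
  have hX1 : 1 < (n:ℝ) * A / D := (one_lt_div hD0).mpr hDlt
  have hB1 : (1:ℝ) < (k:ℝ) ^ δ := hX1.trans hB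
  have hB0 : (0:ℝ) < (k:ℝ) ^ δ := by linarith
  have hu : 1 / ((k:ℝ) ^ δ) < D / ((n:ℝ) * A) := by
    rw [div_lt_div_iff₀ hB0 hnA]
    have := (div_lt_iff₀ hD0).mp hB
    nlinarith
  have h1 : 1 - 1 / ((k:ℝ) ^ δ) > ((n:ℝ) - 1) * (A + 1) / ((n:ℝ) * A) := by
    have : ((n:ℝ) - 1) * (A + 1) / ((n:ℝ) * A) = 1 - D / ((n:ℝ) * A) := by
      field_simp
      ring
    rw [this]
    linarith
  have h2 : ((n:ℝ) - ℓ) * (((n:ℝ) - 1) * (A + 1) / ((n:ℝ) * A)) ≥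
      ((k:ℝ) - ℓ) * (1 + 1 / A) := by
    have key : (0:ℝ) ≤ ((n:ℝ) - ℓ) * ((n:ℝ) - 1) * (A + 1) - (n:ℝ) * (((k:ℝ) - ℓ) * (A + 1)) := by
      nlinarith
    have expand : ((n:ℝ) - ℓ) * (((n:ℝ) - 1) * (A + 1) / ((n:ℝ) * A)) -
        ((k:ℝ) - ℓ) * (1 + 1 / A) =
        (((n:ℝ) - ℓ) * ((n:ℝ) - 1) * (A + 1) - (n:ℝ) * (((k:ℝ) - ℓ) * (A + 1))) / ((n:ℝ) * A) := by
      field_simp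
    have := div_nonneg key hnA.le
    linarith [expand ▸ this]
  have hnl : (0:ℝ) < (n:ℝ) - ℓ := by linarith
  calc ((k:ℝ) - ℓ) * (1 + 1 / A) ≤ ((n:ℝ) - ℓ) * (((n:ℝ) - 1) * (A + 1) / ((n:ℝ) * A)) := h2
    _ < ((n:ℝ) - ℓ) * (1 - 1 / ((k:ℝ) ^ δ)) := by
        apply mul_lt_mul_of_pos_left h1 hnl
end
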